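/- With the setup below, the following two families of relations are equivalent: (i) (v − v^{-1})(E_i F_j − F_j E_i) = δ_{ij}(K_i − K_i^{-1}) for all 1 ≤ i, j ≤ n−1; (ii) (v − v^{-1})(e_i f_j − v^{c_{ij}} f_j e_i) = δ_{ij}(K_i − K_i^{-1}) for all 1 ≤ i, j ≤ n−1. -/

import Mathlib

open Finset

section Aux
variable {F : Type*} [Field F] {A : Type*} [Ring A] [Algebra F A]

/-- `u * x = t • (x * u)`. -/
def SC (u : Aˣ) (x : A) (t : F) : Prop := (u : A) * x = t • (x * (u : A))

lemma SC.eq {u : Aˣ} {x : A} {t : F} (h : SC u x t) :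
    (u : A) * x = t • (x * (u : A)) := h

lemma SC.of_conj {u : Aˣ} {x : A} {t : F} (h : (u : A) * x * (↑u⁻¹ : A) = t • x) :
    SC u x t := by
  have h2 := congrArg (· * (u : A)) h
  simpa [SC, mul_assoc, smul_mul_assoc] using h2

lemma SC.one (x : A) (t : F) (ht : t = 1) : SC (1 : Aˣ) x t := by simp [SC, ht]

lemma SC.mul_u {u w : Aˣ} {x : A} {t s r : F} (hu : SC u x t) (hw : SC w x s)
    (hr : r = t * s) : SC (u * w) x r := by
  unfold SC at *
  calc (↑(u * w) : A) * x = ↑u * (↑w * x) := by rw [Units.val_mul, mul_assoc]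
    _ = s • ((↑u * x) * ↑w) := by rw [hw, mul_smul_comm, mul_assoc]
    _ = s • ((t • (x * ↑u)) * ↑w) := by rw [hu]
    _ = r • (x * ↑(u * w)) := by
        rw [smul_mul_assoc, smul_smul, Units.val_mul, hr, mul_comm t s, mul_assoc]

lemma SC.inv {u : Aˣ} {x : A} {t s : F} (h : SC u x t) (ht : t ≠ 0) (hs : s = t⁻¹) :
    SC u⁻¹ x s := by
  unfold SC at *
  have h2 : x * (u : A) = t⁻¹ • ((u : A) * x) := by
    rw [h, smul_smul, inv_mul_cancel₀ ht, one_smul]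
  calc (↑u⁻¹ : A) * x = ↑u⁻¹ * (x * ↑u) * ↑u⁻¹ := by simp [mul_assoc]
    _ = ↑u⁻¹ * (t⁻¹ • (↑u * x)) * ↑u⁻¹ := by rw [h2]
    _ = t⁻¹ • ((↑u⁻¹ * ↑u) * x * ↑u⁻¹) := by
        simp only [mul_smul_comm, smul_mul_assoc, mul_assoc]
    _ = s • (x * ↑u⁻¹) := by simp [hs]

lemma SC.pow {u : Aˣ} {x : A} {t : F} (h : SC u x t) (m : ℕ) {s : F} (hs : s = t ^ m) :
    SC (u ^ m) x s := by
  subst hs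
  induction m with
  | zero => simpa using SC.one x 1 rfl
  | succ k ih => rw [pow_succ, pow_succ]; exact ih.mul_u h rfl

lemma SC.mul_x {u : Aˣ} {x y : A} {t s r : F} (hx : SC u x t) (hy : SC u y s)
    (hr : r = t * s) : SC u (x * y) r := by
  unfold SC at *
  calc (u : A) * (x * y) = (t • (x * ↑u)) * y := by rw [← mul_assoc, hx]
    _ = t • (x * (↑u * y)) := by rw [smul_mul_assoc, mul_assoc]
    _ = r • (x * y * ↑u) := by rw [hy, mul_smul_comm, smul_smul, hr, mul_assoc]

lemma SC.main {u1 u2 : Aˣ} {X Y : A} {s r w : F}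
    (h1 : SC (u1 * u2) X s) (h3 : SC u2 (X * Y) r)
    (hcomm : (u2 : A) * ↑u1 = ↑u1 * ↑u2)
    (hw : w * r = s) :
    (Y * ↑u1) * (↑u2 * X) - w • (↑u2 * X * (Y * ↑u1))
      = s • ((Y * X - X * Y) * ↑(u1 * u2)) := by
  have T1 : (Y * (u1 : A)) * (↑u2 * X) = s • (Y * X * ↑(u1 * u2)) := by
    rw [mul_assoc, ← mul_assoc (u1 : A), ← Units.val_mul, h1.eq, mul_smul_comm,
      ← mul_assoc]
  have T2 : (u2 : A) * X * (Y * ↑u1) = r • (X * Y * ↑(u1 * u2)) := by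
    rw [mul_assoc, ← mul_assoc X, ← mul_assoc, h3.eq, smul_mul_assoc, mul_assoc,
      hcomm, ← Units.val_mul]
  rw [T1, T2, smul_smul, hw, ← smul_sub, ← sub_mul]

end Aux

theorem stmt_5 (F : Type*) [Field F] (n : ℕ) (hn : 2 ≤ n)
    (v : F) (hv : v ≠ 0)
    (A : Type*) [Ring A] [Algebra F A]
    (L : ℕ → Aˣ) (hL0 : L 0 = 1) (hLn : L n = 1)
    (hLcomm : ∀ i ∈ Finset.Icc 1 (n - 1), ∀ j ∈ Finset.Icc 1 (n - 1),
      Commute (L i : A) (L j : A))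
    (K : ℕ → Aˣ) (hK : ∀ i, K i = (L (i - 1))⁻¹ * (L i) ^ 2 * (L (i + 1))⁻¹)
    (EE FF : ℕ → A)
    (hE : ∀ i ∈ Finset.Icc 1 (n - 1), ∀ j ∈ Finset.Icc 1 (n - 1),
      (L i : A) * EE j * (↑(L i)⁻¹ : A) = (if i = j then v else 1) • EE j)
    (hF : ∀ i ∈ Finset.Icc 1 (n - 1), ∀ j ∈ Finset.Icc 1 (n - 1),
      (L i : A) * FF j * (↑(L i)⁻¹ : A) = (if i = j then v⁻¹ else 1) • FF j)
    (c : ℕ → ℕ → ℤ)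
    (hc : ∀ i j, c i j = if j = i + 1 then -1 else if i = j + 1 then 1 else 0)
    (e f : ℕ → A)
    (he : ∀ i, e i = EE i * (K i : A) ^ i)
    (hf : ∀ i, f i = (↑(K i)⁻¹ : A) ^ i * FF i) :
    (∀ i ∈ Finset.Icc 1 (n - 1), ∀ j ∈ Finset.Icc 1 (n - 1),
      (v - v⁻¹) • (EE i * FF j - FF j * EE i)
        = if i = j then ((K i : A) - (↑(K i)⁻¹ : A)) else 0) ↔
    (∀ i ∈ Finset.Icc 1 (n - 1), ∀ j ∈ Finset.Icc 1 (n - 1),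
      (v - v⁻¹) • (e i * f j - v ^ (c i j) • (f j * e i))
        = if i = j then ((K i : A) - (↑(K i)⁻¹ : A)) else 0) := by
  have hvi : v⁻¹ ≠ 0 := inv_ne_zero hv
  have hitene : ∀ (a b : ℕ) (w : F), w ≠ 0 → (if a = b then w else (1 : F)) ≠ 0 := by
    intro a b w hw; split <;> simp [hw]
  -- L conjugation, extended to indices 0..n
  have hLE : ∀ a ≤ n, ∀ j ∈ Finset.Icc 1 (n - 1),
      SC (L a) (EE j) (if a = j then v else 1) := by
    intro a ha j hj
    have hj' := Finset.mem_Icc.mp hj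
    rcases eq_or_ne a 0 with rfl | h0
    · rw [hL0]; exact SC.one _ _ (by rw [if_neg (by omega)])
    rcases eq_or_ne a n with rfl | hN
    · rw [hLn]; exact SC.one _ _ (by rw [if_neg (by omega)])
    · exact SC.of_conj (hE a (Finset.mem_Icc.mpr ⟨by omega, by omega⟩) j hj)
  have hLF : ∀ a ≤ n, ∀ j ∈ Finset.Icc 1 (n - 1),
      SC (L a) (FF j) (if a = j then v⁻¹ else 1) := by
    intro a ha j hj
    have hj' := Finset.mem_Icc.mp hj
    rcases eq_or_ne a 0 with rfl | h0
    · rw [hL0]; exact SC.one _ _ (by rw [if_neg (by omega)])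
    rcases eq_or_ne a n with rfl | hN
    · rw [hLn]; exact SC.one _ _ (by rw [if_neg (by omega)])
    · exact SC.of_conj (hF a (Finset.mem_Icc.mpr ⟨by omega, by omega⟩) j hj)
  -- K conjugation
  have hKE : ∀ i ∈ Finset.Icc 1 (n - 1), ∀ j ∈ Finset.Icc 1 (n - 1),
      SC (K i) (EE j)
        ((if i - 1 = j then v else 1)⁻¹ * (if i = j then v else 1) ^ 2
          * (if i + 1 = j then v else 1)⁻¹) := by
    intro i hi j hj
    have hi' := Finset.mem_Icc.mp hi
    rw [hK i]
    exact (((hLE (i - 1) (by omega) j hj).inv (hitene _ _ _ hv) rfl).mul_u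
      ((hLE i (by omega) j hj).pow 2 rfl) rfl).mul_u
      ((hLE (i + 1) (by omega) j hj).inv (hitene _ _ _ hv) rfl) rfl
  have hKF : ∀ i ∈ Finset.Icc 1 (n - 1), ∀ j ∈ Finset.Icc 1 (n - 1),
      SC (K i) (FF j)
        ((if i - 1 = j then v⁻¹ else 1)⁻¹ * (if i = j then v⁻¹ else 1) ^ 2
          * (if i + 1 = j then v⁻¹ else 1)⁻¹) := by
    intro i hi j hj
    have hi' := Finset.mem_Icc.mp hi
    rw [hK i]
    exact (((hLF (i - 1) (by omega) j hj).inv (hitene _ _ _ hvi) rfl).mul_u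
      ((hLF i (by omega) j hj).pow 2 rfl) rfl).mul_u
      ((hLF (i + 1) (by omega) j hj).inv (hitene _ _ _ hvi) rfl) rfl
  -- commutation of the K's
  have hLC : ∀ a ≤ n, ∀ b ≤ n, Commute (L a : A) (L b : A) := by
    intro a ha b hb
    rcases eq_or_ne a 0 with rfl | h0
    · rw [hL0, Units.val_one]; exact Commute.one_left _
    rcases eq_or_ne a n with rfl | hN
    · rw [hLn, Units.val_one]; exact Commute.one_left _
    rcases eq_or_ne b 0 with rfl | g0
    · rw [hL0, Units.val_one]; exact Commute.one_right _
    rcases eq_or_ne b n with rfl | gN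
    · rw [hLn, Units.val_one]; exact Commute.one_right _
    exact hLcomm a (Finset.mem_Icc.mpr ⟨by omega, by omega⟩)
      b (Finset.mem_Icc.mpr ⟨by omega, by omega⟩)
  have hLK : ∀ a ≤ n, ∀ j ∈ Finset.Icc 1 (n - 1), Commute (L a : A) (K j : A) := by
    intro a ha j hj
    have hj' := Finset.mem_Icc.mp hj
    rw [hK j, Units.val_mul, Units.val_mul, Units.val_pow_eq_pow_val]
    exact ((hLC a ha (j - 1) (by omega)).units_inv_right.mul_right
      ((hLC a ha j (by omega)).pow_right 2)).mul_right
      (hLC a ha (j + 1) (by omega)).units_inv_right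
  have hKK : ∀ i ∈ Finset.Icc 1 (n - 1), ∀ j ∈ Finset.Icc 1 (n - 1),
      Commute (K i : A) (K j : A) := by
    intro i hi j hj
    have hi' := Finset.mem_Icc.mp hi
    rw [hK i, Units.val_mul, Units.val_mul, Units.val_pow_eq_pow_val]
    exact ((hLK (i - 1) (by omega) j hj).units_inv_left.mul_left
      ((hLK i (by omega) j hj).pow_left 2)).mul_left
      (hLK (i + 1) (by omega) j hj).units_inv_left
  -- the key identity
  have key : ∀ i ∈ Finset.Icc 1 (n - 1), ∀ j ∈ Finset.Icc 1 (n - 1),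
      ∃ (t : F) (G : Aˣ), t ≠ 0 ∧ (i = j → t = 1 ∧ (G : A) = 1) ∧
        e i * f j - v ^ (c i j) • (f j * e i)
          = t • ((EE i * FF j - FF j * EE i) * ↑G) := by
    intro i hi j hj
    have hi' := Finset.mem_Icc.mp hi
    have hj' := Finset.mem_Icc.mp hj
    have hA2 : ((if j - 1 = j then v⁻¹ else 1)⁻¹ * (if j = j then v⁻¹ else 1) ^ 2
        * (if j + 1 = j then v⁻¹ else 1)⁻¹ : F) ≠ 0 :=
      mul_ne_zero (mul_ne_zero (inv_ne_zero (hitene _ _ _ hvi))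
        (pow_ne_zero _ (hitene _ _ _ hvi))) (inv_ne_zero (hitene _ _ _ hvi))
    have hA1 : ((if i - 1 = j then v⁻¹ else 1)⁻¹ * (if i = j then v⁻¹ else 1) ^ 2
        * (if i + 1 = j then v⁻¹ else 1)⁻¹ : F) ≠ 0 :=
      mul_ne_zero (mul_ne_zero (inv_ne_zero (hitene _ _ _ hvi))
        (pow_ne_zero _ (hitene _ _ _ hvi))) (inv_ne_zero (hitene _ _ _ hvi))
    have hB2 : ((if j - 1 = i then v else 1)⁻¹ * (if j = i then v else 1) ^ 2
        * (if j + 1 = i then v else 1)⁻¹ : F) ≠ 0 :=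
      mul_ne_zero (mul_ne_zero (inv_ne_zero (hitene _ _ _ hv))
        (pow_ne_zero _ (hitene _ _ _ hv))) (inv_ne_zero (hitene _ _ _ hv))
    have h1 : SC ((K i) ^ i) (FF j)
        (((if i - 1 = j then v⁻¹ else 1)⁻¹ * (if i = j then v⁻¹ else 1) ^ 2
          * (if i + 1 = j then v⁻¹ else 1)⁻¹) ^ i) := (hKF i hi j hj).pow i rfl
    have h2 : SC (((K j)⁻¹) ^ j) (FF j)
        ((((if j - 1 = j then v⁻¹ else 1)⁻¹ * (if j = j then v⁻¹ else 1) ^ 2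
          * (if j + 1 = j then v⁻¹ else 1)⁻¹)⁻¹) ^ j) :=
      ((hKF j hj j hj).inv hA2 rfl).pow j rfl
    have h3 : SC (((K j)⁻¹) ^ j) (FF j * EE i)
        (((((if j - 1 = j then v⁻¹ else 1)⁻¹ * (if j = j then v⁻¹ else 1) ^ 2
            * (if j + 1 = j then v⁻¹ else 1)⁻¹)
          * ((if j - 1 = i then v else 1)⁻¹ * (if j = i then v else 1) ^ 2
            * (if j + 1 = i then v else 1)⁻¹))⁻¹) ^ j) :=
      (((hKF j hj j hj).mul_x (hKE j hj i hi) rfl).inv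
        (mul_ne_zero hA2 hB2) rfl).pow j rfl
    have hG := h1.mul_u h2 rfl
    have hcomm : (↑(((K j)⁻¹) ^ j) : A) * ↑((K i) ^ i)
        = ↑((K i) ^ i) * ↑(((K j)⁻¹) ^ j) := by
      rw [Units.val_pow_eq_pow_val, Units.val_pow_eq_pow_val]
      exact (((hKK i hi j hj).units_inv_right).pow_pow i j).symm.eq
    have hsc : v ^ (c i j)
        * (((((if j - 1 = j then v⁻¹ else 1)⁻¹ * (if j = j then v⁻¹ else 1) ^ 2
            * (if j + 1 = j then v⁻¹ else 1)⁻¹)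
          * ((if j - 1 = i then v else 1)⁻¹ * (if j = i then v else 1) ^ 2
            * (if j + 1 = i then v else 1)⁻¹))⁻¹) ^ j)
        = ((if i - 1 = j then v⁻¹ else 1)⁻¹ * (if i = j then v⁻¹ else 1) ^ 2
            * (if i + 1 = j then v⁻¹ else 1)⁻¹) ^ i
          * ((((if j - 1 = j then v⁻¹ else 1)⁻¹ * (if j = j then v⁻¹ else 1) ^ 2
            * (if j + 1 = j then v⁻¹ else 1)⁻¹)⁻¹) ^ j) := by
      rw [hc]
      rcases eq_or_ne i j with rfl | hij
      · simp only [if_neg (show i - 1 ≠ i by omega), if_pos rfl,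
          if_neg (show i + 1 ≠ i by omega), if_neg (show ¬ i = i + 1 by omega), if_true]
        field_simp
        rw [← mul_pow, one_div, inv_mul_cancel₀ (pow_ne_zero 2 hv)]
      rcases eq_or_ne j (i + 1) with rfl | hji
      · simp only [if_pos rfl, if_neg (show i - 1 ≠ i + 1 by omega),
          if_neg hij, if_neg (show i + 1 - 1 ≠ i + 1 by omega),
          if_neg (show i + 1 + 1 ≠ i + 1 by omega),
          if_pos (show i + 1 - 1 = i by omega), if_neg (Ne.symm hij),
          if_neg (show i + 1 + 1 ≠ i by omega), zpow_neg, zpow_one, if_true]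
        field_simp
        ring
      rcases eq_or_ne i (j + 1) with rfl | hij2
      · simp only [if_pos rfl, if_neg hji, if_pos (show j + 1 - 1 = j by omega),
          if_neg hij, if_neg (show j + 1 + 1 ≠ j by omega),
          if_neg (show j - 1 ≠ j by omega), if_neg (show j + 1 ≠ j by omega),
          if_neg (show j - 1 ≠ j + 1 by omega), if_neg (Ne.symm hij),
          if_neg (show ¬ j = j + 1 + 1 by omega), zpow_one, if_true]
        field_simp
        ring
      · simp only [if_neg (show i - 1 ≠ j by omega), if_neg hij,
          if_neg (show i + 1 ≠ j by omega), if_neg (show j - 1 ≠ j by omega),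
          if_pos rfl, if_neg (show j + 1 ≠ j by omega),
          if_neg (show j - 1 ≠ i by omega), if_neg (Ne.symm hij),
          if_neg (show j + 1 ≠ i by omega), if_neg hji, if_neg hij2, zpow_zero]
        field_simp
        rw [one_pow]
    refine ⟨((if i - 1 = j then v⁻¹ else 1)⁻¹ * (if i = j then v⁻¹ else 1) ^ 2
        * (if i + 1 = j then v⁻¹ else 1)⁻¹) ^ i
      * ((((if j - 1 = j then v⁻¹ else 1)⁻¹ * (if j = j then v⁻¹ else 1) ^ 2
        * (if j + 1 = j then v⁻¹ else 1)⁻¹)⁻¹) ^ j), (K i) ^ i * ((K j)⁻¹) ^ j,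
      mul_ne_zero (pow_ne_zero _ hA1) (pow_ne_zero _ (inv_ne_zero hA2)), ?_, ?_⟩
    · rintro rfl
      constructor
      · rw [← mul_pow, mul_inv_cancel₀ hA2, one_pow]
      · rw [inv_pow, mul_inv_cancel, Units.val_one]
    · rw [he i, hf j,
        show ((K i : A)) ^ i = ↑((K i) ^ i) from (Units.val_pow_eq_pow_val _ _).symm,
        show ((↑(K j)⁻¹ : A)) ^ j = ↑(((K j)⁻¹) ^ j) from
          (Units.val_pow_eq_pow_val _ _).symm]
      exact SC.main hG h3 hcomm hsc
  -- assemble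
  constructor
  · intro h i hi j hj
    obtain ⟨t, G, htne, hdiag, heq⟩ := key i hi j hj
    have hx := h i hi j hj
    rw [heq, smul_comm (v - v⁻¹) t, ← smul_mul_assoc, hx]
    rcases eq_or_ne i j with rfl | hij
    · obtain ⟨ht, hG⟩ := hdiag rfl
      simp [ht, hG]
    · simp [hij]
  · intro h i hi j hj
    obtain ⟨t, G, htne, hdiag, heq⟩ := key i hi j hj
    have hx := h i hi j hj
    rw [heq, smul_comm (v - v⁻¹) t, ← smul_mul_assoc] at hx
    rcases eq_or_ne i j with rfl | hij
    · obtain ⟨ht, hG⟩ := hdiag rfl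
      rw [ht, hG, one_smul, mul_one] at hx
      exact hx
    · rw [if_neg hij] at hx ⊢
      have h0 : ((v - v⁻¹) • (EE i * FF j - FF j * EE i)) * (G : A) = 0 := by
        rcases smul_eq_zero.mp hx with h' | h'
        · exact absurd h' htne
        · exact h'
      calc (v - v⁻¹) • (EE i * FF j - FF j * EE i)
          = ((v - v⁻¹) • (EE i * FF j - FF j * EE i)) * ↑G * ↑G⁻¹ := by simp
        _ = 0 := by rw [h0, zero_mul]
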